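/- Assume im(Q_t^{1/2}) = im(Q_T^{1/2}) for all t ∈ (0,T]. Then for every t ∈ (0,T), im(Q̂_t^{1/2}) = im(Q_t^{1/2}), where Q̂_t = Q_t^{1/2}(I − V_t^* V_t) Q_t^{1/2}. -/

import Mathlib

open ContinuousLinearMap
open scoped RealInnerProductSpace

section Aux
variable {H : Type*} [NormedAddCommGroup H] [InnerProductSpace ℝ H] [CompleteSpace H]

/-- Douglas-type factorization via the closed graph theorem. -/
lemma aux_factor {B C : H →L[ℝ] H} (hCinj : Function.Injective C)
    (h : Set.range B ⊆ Set.range C) :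
    ∃ R : H →L[ℝ] H, ∀ u, C (R u) = B u := by
  have hex : ∀ u, ∃ v, C v = B u := fun u => h ⟨u, rfl⟩
  choose r hr using hex
  have hadd : ∀ u v, r (u + v) = r u + r v := fun u v =>
    hCinj (by simp [hr, map_add])
  have hsmul : ∀ (a : ℝ) (u : H), r (a • u) = a • r u := fun a u =>
    hCinj (by simp [hr, map_smul])
  let R₀ : H →ₗ[ℝ] H :=
    { toFun := r, map_add' := hadd, map_smul' := hsmul }
  have hgraph : (R₀.graph : Set (H × H)) = {p : H × H | C p.2 - B p.1 = 0} := by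
    ext p
    simp only [SetLike.mem_coe, LinearMap.mem_graph_iff, Set.mem_setOf_eq, sub_eq_zero]
    constructor
    · intro hp; rw [hp]; exact hr p.1
    · intro hp; exact hCinj (by rw [hp]; exact (hr p.1).symm)
  have hclosed : IsClosed (R₀.graph : Set (H × H)) := by
    rw [hgraph]
    exact isClosed_eq (by fun_prop) continuous_const
  have hcont := R₀.continuous_of_isClosed_graph hclosed
  exact ⟨⟨R₀, hcont⟩, hr⟩

/-- A vector is in the range of a self-adjoint operator iff the functional
`y ↦ ⟪x, y⟫` is bounded by `c * ‖B y‖`. -/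
lemma aux_mem_range_iff {B : H →L[ℝ] H} (hB : IsSelfAdjoint B) (x : H) :
    x ∈ Set.range B ↔ ∃ c : ℝ, ∀ y, |⟪x, y⟫| ≤ c * ‖B y‖ := by
  have hBsym : ∀ u y : H, ⟪B u, y⟫ = ⟪u, B y⟫ := by
    intro u y
    conv_lhs => rw [← hB.adjoint_eq]
    exact ContinuousLinearMap.adjoint_inner_left B y u
  constructor
  · rintro ⟨u, rfl⟩
    exact ⟨‖u‖, fun y => by rw [hBsym]; exact abs_real_inner_le_norm u (B y)⟩
  · rintro ⟨c, hc⟩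
    let f : H →ₗ[ℝ] ℝ := (innerSL ℝ x).toLinearMap
    have hker : LinearMap.ker (B : H →ₗ[ℝ] H) ≤ LinearMap.ker f := by
      intro y hy
      have hy' : B y = 0 := hy
      have h1 := hc y
      rw [hy', norm_zero, mul_zero] at h1
      have : ⟪x, y⟫ = 0 := abs_eq_zero.mp (le_antisymm h1 (abs_nonneg _))
      simpa [f] using this
    let φ : (H ⧸ LinearMap.ker (B : H →ₗ[ℝ] H)) →ₗ[ℝ] ℝ := Submodule.liftQ _ f hker
    let e := LinearMap.quotKerEquivRange (B : H →ₗ[ℝ] H)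
    let g₀ : LinearMap.range (B : H →ₗ[ℝ] H) →ₗ[ℝ] ℝ := φ.comp e.symm.toLinearMap
    have hg₀ : ∀ (y : H) (hy : (B : H →ₗ[ℝ] H) y ∈ LinearMap.range (B : H →ₗ[ℝ] H)),
        g₀ ⟨(B : H →ₗ[ℝ] H) y, hy⟩ = ⟪x, y⟫ := by
      intro y hy
      have hsymm : e.symm ⟨(B : H →ₗ[ℝ] H) y, hy⟩ = Submodule.Quotient.mk y := by
        rw [LinearEquiv.symm_apply_eq]
        exact Subtype.ext (LinearMap.quotKerEquivRange_apply_mk _ _).symm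
      simp only [g₀, LinearMap.comp_apply, LinearEquiv.coe_toLinearMap, hsymm]
      simp [φ, f]
    have hbound : ∀ v : LinearMap.range (B : H →ₗ[ℝ] H),
        ‖g₀ v‖ ≤ (max c 0) * ‖(v : H)‖ := by
      rintro ⟨v, y, rfl⟩
      show ‖g₀ ⟨(B : H →ₗ[ℝ] H) y, LinearMap.mem_range_self _ y⟩‖ ≤ (max c 0) * ‖(B : H →ₗ[ℝ] H) y‖
      rw [hg₀]
      calc |⟪x, y⟫| ≤ c * ‖(B : H →ₗ[ℝ] H) y‖ := hc y
        _ ≤ (max c 0) * ‖(B : H →ₗ[ℝ] H) y‖ :=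
            mul_le_mul_of_nonneg_right (le_max_left _ _) (norm_nonneg _)
    let g : LinearMap.range (B : H →ₗ[ℝ] H) →L[ℝ] ℝ :=
      LinearMap.mkContinuous g₀ (max c 0) hbound
    obtain ⟨G, hG, -⟩ := exists_extension_norm_eq
      (LinearMap.range (B : H →ₗ[ℝ] H)) g
    set z := (InnerProductSpace.toDual ℝ H).symm G with hz
    refine ⟨z, ?_⟩
    refine (ext_inner_right ℝ fun v => ?_)
    have h1 : ⟪B z, v⟫ = ⟪z, B v⟫ := hBsym z v
    have h2 : ⟪z, B v⟫ = G (B v) := InnerProductSpace.toDual_symm_apply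
    have h3 : G (B v) = g₀ ⟨(B : H →ₗ[ℝ] H) v, LinearMap.mem_range_self _ v⟩ := by
      have := hG ⟨(B : H →ₗ[ℝ] H) v, LinearMap.mem_range_self (B : H →ₗ[ℝ] H) v⟩
      exact this
    rw [h1, h2, h3, hg₀]

end Aux
theorem bridge_covariance_range
    {H : Type*} [NormedAddCommGroup H] [InnerProductSpace ℝ H] [CompleteSpace H]
    {T : ℝ} (hT : 0 < T)
    (S : ℝ → H →L[ℝ] H) (Qop Qhalf V Qhat Qhathalf : ℝ → H →L[ℝ] H)
    (hsa : ∀ t ∈ Set.Ioc (0:ℝ) T, IsSelfAdjoint (Qhalf t))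
    (hsq : ∀ t ∈ Set.Ioc (0:ℝ) T, (Qhalf t).comp (Qhalf t) = Qop t)
    (hinj : ∀ t ∈ Set.Ioc (0:ℝ) T, Function.Injective (Qhalf t))
    (hdense : ∀ t ∈ Set.Ioc (0:ℝ) T, DenseRange (Qhalf t))
    (hV : ∀ t ∈ Set.Ioo (0:ℝ) T, (Qhalf T).comp (V t) = (S (T - t)).comp (Qhalf t))
    (hid : ∀ t ∈ Set.Ico (0:ℝ) T,
      Qop T = Qop t + (S t).comp ((Qop (T - t)).comp (ContinuousLinearMap.adjoint (S t))))
    (hQhat : ∀ t ∈ Set.Ioo (0:ℝ) T, Qhat t = (Qhalf t).comp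
      (((1 : H →L[ℝ] H) - (ContinuousLinearMap.adjoint (V t)).comp (V t)).comp (Qhalf t)))
    (hhatsa : ∀ t ∈ Set.Ioo (0:ℝ) T, IsSelfAdjoint (Qhathalf t))
    (hhatsq : ∀ t ∈ Set.Ioo (0:ℝ) T, (Qhathalf t).comp (Qhathalf t) = Qhat t)
    (hrangeEq : ∀ t ∈ Set.Ioc (0:ℝ) T, Set.range (Qhalf t) = Set.range (Qhalf T)) :
    ∀ t ∈ Set.Ioo (0:ℝ) T, Set.range (Qhathalf t) = Set.range (Qhalf t) := by
  intro t ht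
  obtain ⟨ht0, htT⟩ := ht
  have htIoo : t ∈ Set.Ioo (0:ℝ) T := ⟨ht0, htT⟩
  have htIoc : t ∈ Set.Ioc (0:ℝ) T := ⟨ht0, le_of_lt htT⟩
  have hTIoc : T ∈ Set.Ioc (0:ℝ) T := ⟨hT, le_refl T⟩
  have hsIoc : T - t ∈ Set.Ioc (0:ℝ) T := ⟨by linarith, by linarith⟩
  have hsIco : T - t ∈ Set.Ico (0:ℝ) T := ⟨by linarith, by linarith⟩
  -- symmetry of the square roots
  have hsym : ∀ r ∈ Set.Ioc (0:ℝ) T, ∀ u y : H, ⟪Qhalf r u, y⟫ = ⟪u, Qhalf r y⟫ := by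
    intro r hr u y
    conv_lhs => rw [← (hsa r hr).adjoint_eq]
    exact ContinuousLinearMap.adjoint_inner_left (Qhalf r) y u
  -- quadratic form of Qop
  have hnorm : ∀ r, r ∈ Set.Ioc (0:ℝ) T → ∀ y, ⟪Qop r y, y⟫ = ‖Qhalf r y‖ ^ 2 := by
    intro r hr y
    rw [← hsq r hr]
    show ⟪(Qhalf r) ((Qhalf r) y), y⟫ = _
    rw [hsym r hr, real_inner_self_eq_norm_sq]
  -- the fundamental identity
  have hID : ∀ w, ‖Qhalf T w‖ ^ 2 = ‖Qhalf (T - t) w‖ ^ 2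
      + ‖Qhalf t ((ContinuousLinearMap.adjoint (S (T - t))) w)‖ ^ 2 := by
    intro w
    have h0 := hid (T - t) hsIco
    rw [sub_sub_cancel] at h0
    have h1 := congrArg (fun A : H →L[ℝ] H => ⟪A w, w⟫) h0
    simp only [ContinuousLinearMap.add_apply, ContinuousLinearMap.comp_apply,
      inner_add_left] at h1
    rw [hnorm T hTIoc, hnorm (T - t) hsIoc] at h1
    have h2 : ⟪(S (T - t)) ((Qop t) ((ContinuousLinearMap.adjoint (S (T - t))) w)), w⟫
        = ‖Qhalf t ((ContinuousLinearMap.adjoint (S (T - t))) w)‖ ^ 2 := by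
      rw [← ContinuousLinearMap.adjoint_inner_right (S (T - t)) _ w]
      rw [hnorm t htIoc]
    rw [h2] at h1
    exact h1
  -- factorization `Qhalf T = Qhalf (T-t) ∘ R`
  have hsub : Set.range (Qhalf T) ⊆ Set.range (Qhalf (T - t)) := by
    rw [hrangeEq (T - t) hsIoc]
  obtain ⟨R, hR⟩ := aux_factor (hinj (T - t) hsIoc) hsub
  have hRadj : ∀ w, Qhalf T w
      = (ContinuousLinearMap.adjoint R) (Qhalf (T - t) w) := by
    intro w
    refine ext_inner_right ℝ fun v => ?_
    calc ⟪Qhalf T w, v⟫ = ⟪w, Qhalf T v⟫ := hsym T hTIoc w v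
      _ = ⟪w, Qhalf (T - t) (R v)⟫ := by rw [hR]
      _ = ⟪Qhalf (T - t) w, R v⟫ := (hsym (T - t) hsIoc w (R v)).symm
      _ = ⟪(ContinuousLinearMap.adjoint R) (Qhalf (T - t) w), v⟫ :=
          (ContinuousLinearMap.adjoint_inner_left R v (Qhalf (T - t) w)).symm
  set K : ℝ := max ‖ContinuousLinearMap.adjoint R‖ 1 with hKdef
  have hK1 : (1:ℝ) ≤ K := le_max_right _ _
  have hK0 : (0:ℝ) < K := lt_of_lt_of_le one_pos hK1
  have hKb : ∀ w, ‖Qhalf T w‖ ≤ K * ‖Qhalf (T - t) w‖ := by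
    intro w
    rw [hRadj w]
    calc ‖(ContinuousLinearMap.adjoint R) (Qhalf (T - t) w)‖
        ≤ ‖ContinuousLinearMap.adjoint R‖ * ‖Qhalf (T - t) w‖ :=
          ContinuousLinearMap.le_opNorm _ _
      _ ≤ K * ‖Qhalf (T - t) w‖ :=
          mul_le_mul_of_nonneg_right (le_max_left _ _) (norm_nonneg _)
  set k2 : ℝ := 1 - 1 / K ^ 2 with hk2def
  have hK2pos : (0:ℝ) < K ^ 2 := by positivity
  have hk2nonneg : 0 ≤ k2 := by
    have : 1 / K ^ 2 ≤ 1 := by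
      rw [div_le_one hK2pos]; nlinarith
    simp only [hk2def]; linarith
  have hk2lt : k2 < 1 := by
    have : 0 < 1 / K ^ 2 := by positivity
    simp only [hk2def]; linarith
  -- bound (4)
  have h4 : ∀ w, ‖Qhalf t ((ContinuousLinearMap.adjoint (S (T - t))) w)‖ ^ 2
      ≤ k2 * ‖Qhalf T w‖ ^ 2 := by
    intro w
    have h1 := hID w
    have h2 : ‖Qhalf T w‖ ^ 2 ≤ K ^ 2 * ‖Qhalf (T - t) w‖ ^ 2 := by
      have := hKb w
      nlinarith [norm_nonneg (Qhalf T w), norm_nonneg (Qhalf (T - t) w)]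
    have hb : ‖Qhalf T w‖ ^ 2 / K ^ 2 ≤ ‖Qhalf (T - t) w‖ ^ 2 := by
      rw [div_le_iff₀ hK2pos]; nlinarith
    have hc : k2 * ‖Qhalf T w‖ ^ 2
        = ‖Qhalf T w‖ ^ 2 - ‖Qhalf T w‖ ^ 2 / K ^ 2 := by
      simp only [hk2def]; field_simp
    rw [hc]; linarith
  -- norm bound on V t
  have hVb : ∀ u, ‖V t u‖ ^ 2 ≤ k2 * ‖u‖ ^ 2 := by
    intro u
    have hstep : ∀ v ∈ Set.range (Qhalf T),
        |⟪V t u, v⟫| ≤ Real.sqrt k2 * ‖u‖ * ‖v‖ := by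
      rintro v ⟨w, rfl⟩
      have e0 : Qhalf T (V t u) = S (T - t) (Qhalf t u) := by
        have := congrArg (fun A : H →L[ℝ] H => A u) (hV t htIoo)
        simpa using this
      have e1 : ⟪V t u, Qhalf T w⟫
          = ⟪u, Qhalf t ((ContinuousLinearMap.adjoint (S (T - t))) w)⟫ := by
        calc ⟪V t u, Qhalf T w⟫ = ⟪Qhalf T (V t u), w⟫ := (hsym T hTIoc (V t u) w).symm
          _ = ⟪S (T - t) (Qhalf t u), w⟫ := by rw [e0]
          _ = ⟪Qhalf t u, (ContinuousLinearMap.adjoint (S (T - t))) w⟫ :=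
              (ContinuousLinearMap.adjoint_inner_right (S (T - t)) _ w).symm
          _ = ⟪u, Qhalf t ((ContinuousLinearMap.adjoint (S (T - t))) w)⟫ :=
              hsym t htIoc u _
      have e2 : ‖Qhalf t ((ContinuousLinearMap.adjoint (S (T - t))) w)‖
          ≤ Real.sqrt k2 * ‖Qhalf T w‖ := by
        have := Real.sqrt_le_sqrt (h4 w)
        rwa [Real.sqrt_sq (norm_nonneg _), Real.sqrt_mul hk2nonneg,
          Real.sqrt_sq (norm_nonneg _)] at this
      calc |⟪V t u, Qhalf T w⟫|
          = |⟪u, Qhalf t ((ContinuousLinearMap.adjoint (S (T - t))) w)⟫| := by rw [e1]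
        _ ≤ ‖u‖ * ‖Qhalf t ((ContinuousLinearMap.adjoint (S (T - t))) w)‖ :=
            abs_real_inner_le_norm _ _
        _ ≤ ‖u‖ * (Real.sqrt k2 * ‖Qhalf T w‖) :=
            mul_le_mul_of_nonneg_left e2 (norm_nonneg _)
        _ = Real.sqrt k2 * ‖u‖ * ‖Qhalf T w‖ := by ring
    have hall : ∀ v, |⟪V t u, v⟫| ≤ Real.sqrt k2 * ‖u‖ * ‖v‖ := by
      intro v
      have hclosed : IsClosed {v : H | |⟪V t u, v⟫| ≤ Real.sqrt k2 * ‖u‖ * ‖v‖} := by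
        apply isClosed_le
        · exact (continuous_const.inner continuous_id).abs
        · exact continuous_const.mul continuous_norm
      have hsub2 : closure (Set.range (Qhalf T))
          ⊆ {v : H | |⟪V t u, v⟫| ≤ Real.sqrt k2 * ‖u‖ * ‖v‖} :=
        hclosed.closure_subset_iff.mpr hstep
      have hv : v ∈ closure (Set.range (Qhalf T)) := by
        rw [(hdense T hTIoc).closure_eq]; trivial
      exact hsub2 hv
    have h5 := hall (V t u)
    rw [real_inner_self_eq_norm_sq, abs_of_nonneg (by positivity)] at h5
    nlinarith [Real.sq_sqrt hk2nonneg, Real.sqrt_nonneg k2, norm_nonneg (V t u),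
      norm_nonneg u, sq_nonneg (‖V t u‖ - Real.sqrt k2 * ‖u‖)]
  -- quadratic form of Qhat
  have hhat : ∀ y, ‖Qhathalf t y‖ ^ 2
      = ‖Qhalf t y‖ ^ 2 - ‖V t (Qhalf t y)‖ ^ 2 := by
    intro y
    have h1 : ⟪Qhat t y, y⟫ = ‖Qhathalf t y‖ ^ 2 := by
      rw [← hhatsq t htIoo]
      have hx := ContinuousLinearMap.adjoint_inner_left (Qhathalf t) y ((Qhathalf t) y)
      rw [(hhatsa t htIoo).adjoint_eq] at hx
      show ⟪(Qhathalf t) ((Qhathalf t) y), y⟫ = _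
      rw [hx, real_inner_self_eq_norm_sq]
    have h2 : ⟪Qhat t y, y⟫ = ‖Qhalf t y‖ ^ 2 - ‖V t (Qhalf t y)‖ ^ 2 := by
      rw [hQhat t htIoo]
      simp only [ContinuousLinearMap.comp_apply]
      rw [hsym t htIoc]
      simp only [ContinuousLinearMap.sub_apply, ContinuousLinearMap.one_apply,
        ContinuousLinearMap.comp_apply, inner_sub_left]
      rw [real_inner_self_eq_norm_sq, ContinuousLinearMap.adjoint_inner_left,
        real_inner_self_eq_norm_sq]
    exact h1.symm.trans h2
  -- two-sided norm bounds
  have hup : ∀ y, ‖Qhathalf t y‖ ≤ ‖Qhalf t y‖ := by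
    intro y
    have h2 : ‖Qhathalf t y‖ ^ 2 ≤ ‖Qhalf t y‖ ^ 2 := by
      have := hhat y; nlinarith [sq_nonneg ‖V t (Qhalf t y)‖]
    have h3 := Real.sqrt_le_sqrt h2
    rwa [Real.sqrt_sq (norm_nonneg _), Real.sqrt_sq (norm_nonneg _)] at h3
  have hm : (0:ℝ) < 1 - k2 := by linarith
  have hlow : ∀ y, Real.sqrt (1 - k2) * ‖Qhalf t y‖ ≤ ‖Qhathalf t y‖ := by
    intro y
    have h2 : (1 - k2) * ‖Qhalf t y‖ ^ 2 ≤ ‖Qhathalf t y‖ ^ 2 := by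
      have := hVb (Qhalf t y); rw [hhat y]; linarith
    have h3 := Real.sqrt_le_sqrt h2
    rwa [Real.sqrt_mul (le_of_lt hm), Real.sqrt_sq (norm_nonneg _),
      Real.sqrt_sq (norm_nonneg _)] at h3
  -- conclusion via the range criterion
  ext x
  constructor
  · intro hx
    obtain ⟨c, hc⟩ := (aux_mem_range_iff (hhatsa t htIoo) x).mp hx
    refine (aux_mem_range_iff (hsa t htIoc) x).mpr ⟨max c 0, fun y => ?_⟩
    calc |⟪x, y⟫| ≤ c * ‖Qhathalf t y‖ := hc y
      _ ≤ max c 0 * ‖Qhathalf t y‖ :=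
          mul_le_mul_of_nonneg_right (le_max_left _ _) (norm_nonneg _)
      _ ≤ max c 0 * ‖Qhalf t y‖ :=
          mul_le_mul_of_nonneg_left (hup y) (le_max_right _ _)
  · intro hx
    obtain ⟨c, hc⟩ := (aux_mem_range_iff (hsa t htIoc) x).mp hx
    have hmpos : 0 < Real.sqrt (1 - k2) := Real.sqrt_pos.mpr hm
    refine (aux_mem_range_iff (hhatsa t htIoo) x).mpr
      ⟨max c 0 / Real.sqrt (1 - k2), fun y => ?_⟩
    have h6 : ‖Qhalf t y‖ ≤ ‖Qhathalf t y‖ / Real.sqrt (1 - k2) := by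
      rw [le_div_iff₀ hmpos, mul_comm]
      exact hlow y
    calc |⟪x, y⟫| ≤ c * ‖Qhalf t y‖ := hc y
      _ ≤ max c 0 * ‖Qhalf t y‖ :=
          mul_le_mul_of_nonneg_right (le_max_left _ _) (norm_nonneg _)
      _ ≤ max c 0 * (‖Qhathalf t y‖ / Real.sqrt (1 - k2)) :=
          mul_le_mul_of_nonneg_left h6 (le_max_right _ _)
      _ = max c 0 / Real.sqrt (1 - k2) * ‖Qhathalf t y‖ := by ring
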